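/- Let G_n be obtained from a d-regular weighted multigraph G on n−1 vertices (all edge weights 2, underlying graph d/2-regular) by splitting one vertex v into v_0, v_1 joined by an edge of weight d/2, with each former weight-2 edge {v,w} replaced by weight-1 edges {v_0,w} and {v_1,w}. Then for every ε > 0 there exists N such that for all n ≥ N, λ_2(G_n) ≥ d/2 − ε. -/

import Mathlib

open Matrix

lemma key {n : ℕ} (hn : 2 ≤ n) (A : Matrix (Fin n) (Fin n) ℝ) (hA : A.IsHermitian)
    (ev : Fin n → ℝ) (σ : Equiv.Perm (Fin n)) (hev : ev = hA.eigenvalues ∘ σ)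
    (hanti : Antitone ev) (t : ℝ) (v x : Fin n → ℝ) (hv : v ≠ 0)
    (hAv : A *ᵥ v = t • v) (ht : ∀ k, hA.eigenvalues k ≤ t)
    (hvx : v ⬝ᵥ x = 0) :
    x ⬝ᵥ (A *ᵥ x) ≤ ev ⟨1, Nat.lt_of_lt_of_le one_lt_two hn⟩ * (x ⬝ᵥ x) := by
  haveI : NeZero n := ⟨by omega⟩
  set μ := hA.eigenvalues with hμ
  set U : Matrix (Fin n) (Fin n) ℝ := (hA.eigenvectorUnitary : Matrix (Fin n) (Fin n) ℝ) with hUdef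
  have hstar : star U = Uᵀ := by
    rw [Matrix.star_eq_conjTranspose]
    ext k l; simp [Matrix.conjTranspose_apply]
  have hU1 : Uᵀ * U = 1 := by
    rw [← hstar]; exact (Matrix.mem_unitaryGroup_iff').mp hA.eigenvectorUnitary.2
  have hU2 : U * Uᵀ = 1 := by
    rw [← hstar]; exact (Matrix.mem_unitaryGroup_iff).mp hA.eigenvectorUnitary.2
  have hspec : A = U * Matrix.diagonal μ * Uᵀ := by
    rw [← hstar]
    have := hA.spectral_theorem
    simpa using this
  set c : Fin n → ℝ := Uᵀ *ᵥ x with hc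
  set a : Fin n → ℝ := Uᵀ *ᵥ v with ha
  -- pairing identities
  have pair : ∀ y z : Fin n → ℝ, y ⬝ᵥ (A *ᵥ z) = ∑ k, μ k * ((Uᵀ *ᵥ y) k * (Uᵀ *ᵥ z) k) := by
    intro y z
    rw [hspec, ← Matrix.mulVec_mulVec, ← Matrix.mulVec_mulVec, Matrix.dotProduct_mulVec,
      ← Matrix.mulVec_transpose]
    simp only [dotProduct, Matrix.mulVec_diagonal]
    exact Finset.sum_congr rfl fun k _ => by ring
  have pair0 : ∀ y z : Fin n → ℝ, y ⬝ᵥ z = ∑ k, (Uᵀ *ᵥ y) k * (Uᵀ *ᵥ z) k := by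
    intro y z
    have h1 : y ⬝ᵥ z = y ⬝ᵥ ((U * Uᵀ) *ᵥ z) := by rw [hU2]; simp
    rw [h1, ← Matrix.mulVec_mulVec, Matrix.dotProduct_mulVec, ← Matrix.mulVec_transpose]
    rfl
  -- eigen-equation for a
  have haeq : ∀ k, μ k * a k = t * a k := by
    intro k
    have h1 : Uᵀ *ᵥ (A *ᵥ v) = Uᵀ *ᵥ (t • v) := by rw [hAv]
    rw [hspec] at h1
    have h2 : (Matrix.diagonal μ) *ᵥ a = t • a := by
      calc (Matrix.diagonal μ) *ᵥ a = (Matrix.diagonal μ * Uᵀ) *ᵥ v := by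
            rw [← Matrix.mulVec_mulVec]
        _ = (Uᵀ * (U * Matrix.diagonal μ * Uᵀ)) *ᵥ v := by
            rw [show Uᵀ * (U * Matrix.diagonal μ * Uᵀ) = (Uᵀ * U) * Matrix.diagonal μ * Uᵀ by
              rw [← mul_assoc, ← mul_assoc], hU1, one_mul]
        _ = Uᵀ *ᵥ ((U * Matrix.diagonal μ * Uᵀ) *ᵥ v) := by rw [Matrix.mulVec_mulVec]
        _ = Uᵀ *ᵥ (t • v) := h1
        _ = t • a := by rw [Matrix.mulVec_smul]
    have := congrFun h2 k
    simpa [Matrix.mulVec_diagonal] using this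
  have hva : v = U *ᵥ a := by
    rw [ha, Matrix.mulVec_mulVec, hU2, Matrix.one_mulVec]
  set e1 := ev ⟨1, Nat.lt_of_lt_of_le one_lt_two hn⟩ with he1
  -- pointwise bound
  have hpoint : ∀ k, μ k * (c k * c k) ≤ e1 * (c k * c k) := by
    intro k
    by_cases hcase : t ≤ e1
    · exact mul_le_mul_of_nonneg_right (le_trans (ht k) hcase) (mul_self_nonneg _)
    · push_neg at hcase
      have hμle : ∀ k0 : Fin n, k0 ≠ σ 0 → μ k0 ≤ e1 := by
        intro k0 hk0
        have h0 : σ.symm k0 ≠ 0 := fun h => hk0 (by rw [← h, Equiv.apply_symm_apply])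
        have h1 : (⟨1, Nat.lt_of_lt_of_le one_lt_two hn⟩ : Fin n) ≤ σ.symm k0 := by
          rw [Fin.le_def]
          have hval : ((σ.symm k0 : Fin n) : ℕ) ≠ 0 := by
            exact fun h => h0 (Fin.ext (by rw [h]; simp))
          show 1 ≤ ((σ.symm k0 : Fin n) : ℕ)
          omega
        simpa [he1, hev] using hanti h1
      by_cases hk : k = σ 0
      · -- show c k = 0
        have haz : ∀ k0, k0 ≠ σ 0 → a k0 = 0 := by
          intro k0 hk0
          have := haeq k0
          have hne : μ k0 ≠ t := ne_of_lt (lt_of_le_of_lt (hμle k0 hk0) hcase)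
          by_contra haz0
          exact hne (mul_right_cancel₀ haz0 this)
        have hane : a (σ 0) ≠ 0 := by
          intro h0
          apply hv
          have : a = 0 := by
            funext k0
            by_cases hk0 : k0 = σ 0
            · rw [hk0]; exact h0
            · exact haz k0 hk0
          rw [hva, this, Matrix.mulVec_zero]
        have hsum : ∑ k0, a k0 * c k0 = 0 := by rw [← pair0 v x]; exact hvx
        have hc0 : c (σ 0) = 0 := by
          rw [Finset.sum_eq_single (σ 0)] at hsum
          · rcases mul_eq_zero.mp hsum with h | h
            · exact absurd h hane
            · exact h
          · intro k0 _ hk0; rw [haz k0 hk0, zero_mul]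
          · intro h; exact absurd (Finset.mem_univ _) h
        rw [hk, hc0]
        simp
      · exact mul_le_mul_of_nonneg_right (hμle k hk) (mul_self_nonneg _)
  calc x ⬝ᵥ (A *ᵥ x) = ∑ k, μ k * (c k * c k) := pair x x
    _ ≤ ∑ k, e1 * (c k * c k) := Finset.sum_le_sum fun k _ => hpoint k
    _ = e1 * ∑ k, c k * c k := by rw [Finset.mul_sum]
    _ = e1 * (x ⬝ᵥ x) := by rw [← pair0 x x]


lemma eig_le {n : ℕ} (A : Matrix (Fin n) (Fin n) ℝ) (hA : A.IsHermitian) (t : ℝ)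
    (hpos : ∀ k l, 0 ≤ A k l) (hdiag : ∀ k, A k k = 0) (hrow : ∀ k, ∑ l, A k l = t)
    (k : Fin n) : hA.eigenvalues k ≤ t := by
  have hb := hA.mulVec_eigenvectorBasis k
  have hne : (hA.eigenvectorBasis k : Fin n → ℝ) ≠ 0 := by
    have h := hA.eigenvectorBasis.toBasis.ne_zero k
    simpa using h
  have hvec : Module.End.HasEigenvalue (Matrix.toLin' A) ((hA.eigenvalues k : ℝ)) := by
    apply Module.End.hasEigenvalue_of_hasEigenvector
      (x := (hA.eigenvectorBasis k : Fin n → ℝ))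
    constructor
    · rw [Module.End.mem_eigenspace_iff]
      simpa [Matrix.toLin'_apply] using hb
    · exact hne
  obtain ⟨k', hk'⟩ := eigenvalue_mem_ball hvec
  rw [Metric.mem_closedBall, Real.dist_eq, hdiag k', sub_zero] at hk'
  have hsum : ∑ l ∈ Finset.univ.erase k', ‖A k' l‖ = t := by
    rw [Finset.sum_congr rfl (fun l _ => Real.norm_of_nonneg (hpos k' l)),
      Finset.sum_erase_eq_sub (Finset.mem_univ k'), hrow, hdiag, sub_zero]
  rw [hsum] at hk'
  exact le_of_abs_le hk'



/-- Splitting one vertex of a `d`-regular weighted multigraph (underlying graph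
`d/2`-regular, all weights 2) into two vertices `i, j` joined by a weight-`d/2` edge,
with each former weight-2 edge replaced by two weight-1 edges, yields a graph whose
second adjacency eigenvalue is at least `d/2 − ε` for all sufficiently large `n`. -/
theorem stmt14 (d : ℕ) (ε : ℝ) (hε : 0 < ε) :
    ∃ N : ℕ, 2 ≤ N ∧ ∀ n, N ≤ n → ∀ (hn : 2 ≤ n)
      (A : Matrix (Fin n) (Fin n) ℝ) (i j : Fin n),
      i ≠ j →
      A.IsSymm →
      (∀ k, A k k = 0) →
      A i j = (d : ℝ) / 2 →
      (∀ k, k ≠ i → k ≠ j → A i k = A j k ∧ (A i k = 0 ∨ A i k = 1)) →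
      (∀ k l, k ≠ i → k ≠ j → l ≠ i → l ≠ j → A k l = 0 ∨ A k l = 2) →
      (∀ k, ∑ l, A k l = d) →
      ∀ (hA : A.IsHermitian) (ev : Fin n → ℝ) (σ : Equiv.Perm (Fin n)),
        ev = hA.eigenvalues ∘ σ → Antitone ev →
        (d : ℝ) / 2 - ε ≤ ev ⟨1, by omega⟩ := by
  refine ⟨⌈(d:ℝ)/ε⌉₊ + 5, by omega, ?_⟩
  intro n hN hn2 A i j hij hsymm hdiag hAij h5 h6 hrow hA ev σ hev hanti
  have hn5 : 5 ≤ n := by omega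
  have hnpos : (0:ℝ) < (n:ℝ) := by positivity
  have hnR : (5:ℝ) ≤ (n:ℝ) := by exact_mod_cast hn5
  have hn0 : (n:ℝ) ≠ 0 := ne_of_gt hnpos
  -- symmetry entrywise
  have hsym' : ∀ k l, A k l = A l k := by
    intro k l
    have := congrFun (congrFun hsymm l) k
    simpa [Matrix.transpose_apply] using this
  -- nonnegativity of entries
  have hd2 : (0:ℝ) ≤ (d:ℝ)/2 := by positivity
  have hpos : ∀ k l, 0 ≤ A k l := by
    intro k l
    by_cases hki : k = i
    · by_cases hlj : l = j
      · rw [hki, hlj, hAij]; exact hd2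
      · by_cases hli : l = i
        · rw [hki, hli, hdiag]
        · rw [hki]
          rcases (h5 l hli hlj).2 with h | h <;> rw [h] <;> norm_num
    · by_cases hkj : k = j
      · by_cases hli : l = i
        · rw [hkj, hli, hsym' j i, hAij]; exact hd2
        · by_cases hlj : l = j
          · rw [hkj, hlj, hdiag]
          · rw [hkj, ← (h5 l hli hlj).1]
            rcases (h5 l hli hlj).2 with h | h <;> rw [h] <;> norm_num
      · by_cases hli : l = i
        · rw [hli, hsym' k i]
          rcases (h5 k hki hkj).2 with h | h <;> rw [h] <;> norm_num
        · by_cases hlj : l = j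
          · rw [hlj, hsym' k j, ← (h5 k hki hkj).1]
            rcases (h5 k hki hkj).2 with h | h <;> rw [h] <;> norm_num
          · rcases h6 k l hki hkj hli hlj with h | h <;> rw [h] <;> norm_num
  -- all-ones eigenvector
  have hone : A *ᵥ (fun _ => (1:ℝ)) = (d:ℝ) • (fun _ => (1:ℝ)) := by
    funext k
    simp only [Matrix.mulVec, dotProduct, mul_one, Pi.smul_apply, smul_eq_mul]
    rw [hrow k]
  have honene : (fun _ => (1:ℝ)) ≠ (0 : Fin n → ℝ) := by
    intro h
    have := congrFun h ⟨0, by omega⟩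
    norm_num at this
  have ht : ∀ k, hA.eigenvalues k ≤ (d:ℝ) := eig_le A hA d hpos hdiag hrow
  -- test vector
  set u : Fin n → ℝ := fun k => (if k = i then 1 else 0) + (if k = j then 1 else 0) with hu
  set x : Fin n → ℝ := fun k => u k - 2/(n:ℝ) with hx
  -- auxiliary sums
  have hcol : ∀ l, ∑ k, A k l = (d:ℝ) := by
    intro l
    rw [Finset.sum_congr rfl fun k _ => hsym' k l]
    exact hrow l
  have hsum_u : ∑ k, u k = 2 := by
    rw [show (∑ k, u k) = ∑ k, ((if k = i then (1:ℝ) else 0) + (if k = j then 1 else 0)) from rfl,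
      Finset.sum_add_distrib, Finset.sum_ite_eq' Finset.univ i (fun _ => (1:ℝ)),
      Finset.sum_ite_eq' Finset.univ j (fun _ => (1:ℝ))]
    norm_num
  have huu : ∀ k, u k * u k = u k := by
    intro k
    by_cases hki : k = i
    · by_cases hkj : k = j
      · exact absurd (hki.symm.trans hkj) hij
      · simp [hu, hki, hkj, hij]
    · by_cases hkj : k = j
      · simp [hu, hki, hkj, Ne.symm hij]
      · simp [hu, hki, hkj]
  have hsum_uA : ∑ k, u k * (A k i + A k j) = (d:ℝ) := by
    have h1 : ∑ k, u k * (A k i + A k j) = (A i i + A i j) + (A j i + A j j) := by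
      simp [hu, add_mul, ite_mul, one_mul, zero_mul, Finset.sum_add_distrib]
    rw [h1, hdiag i, hdiag j, hAij, hsym' j i, hAij]
    ring
  have hsum_cols : ∑ k, (A k i + A k j) = 2*(d:ℝ) := by
    rw [Finset.sum_add_distrib, hcol i, hcol j]; ring
  -- A *ᵥ x
  have hAx : ∀ k, (A *ᵥ x) k = A k i + A k j - 2*(d:ℝ)/(n:ℝ) := by
    intro k
    simp only [Matrix.mulVec, dotProduct, hx]
    have expand : ∀ l, A k l * (u l - 2/(n:ℝ)) = A k l * u l - (2/(n:ℝ)) * A k l := by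
      intro l; ring
    rw [Finset.sum_congr rfl fun l _ => expand l, Finset.sum_sub_distrib, ← Finset.mul_sum,
      hrow k]
    have h2 : ∑ l, A k l * u l = A k i + A k j := by
      simp [hu, mul_add, mul_ite, mul_one, mul_zero, Finset.sum_add_distrib]
    rw [h2]; ring
  -- Rayleigh numerator
  have hxAx : x ⬝ᵥ (A *ᵥ x) = (d:ℝ) - 4*(d:ℝ)/(n:ℝ) := by
    rw [dotProduct]
    rw [Finset.sum_congr rfl fun k _ => by rw [hAx k]]
    have expand : ∀ k, x k * (A k i + A k j - 2*(d:ℝ)/(n:ℝ)) =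
        u k * (A k i + A k j) - (2*(d:ℝ)/(n:ℝ)) * u k - (2/(n:ℝ)) * (A k i + A k j)
          + (2/(n:ℝ)) * (2*(d:ℝ)/(n:ℝ)) := by
      intro k; rw [hx]; ring
    rw [Finset.sum_congr rfl fun k _ => expand k]
    rw [Finset.sum_add_distrib, Finset.sum_sub_distrib, Finset.sum_sub_distrib,
      ← Finset.mul_sum, ← Finset.mul_sum, hsum_uA, hsum_u, hsum_cols, Finset.sum_const,
      Finset.card_univ, Fintype.card_fin, nsmul_eq_mul]
    field_simp
    ring
  -- norm squared
  have hxx : x ⬝ᵥ x = 2 - 4/(n:ℝ) := by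
    rw [dotProduct]
    have expand : ∀ k, x k * x k = u k * u k - (4/(n:ℝ)) * u k + (2/(n:ℝ)) * (2/(n:ℝ)) := by
      intro k; rw [hx]; ring
    rw [Finset.sum_congr rfl fun k _ => expand k]
    rw [Finset.sum_add_distrib, Finset.sum_sub_distrib,
      Finset.sum_congr rfl fun k _ => huu k, hsum_u, ← Finset.mul_sum, hsum_u,
      Finset.sum_const, Finset.card_univ, Fintype.card_fin, nsmul_eq_mul]
    field_simp
    ring
  -- orthogonality
  have hvx : (fun _ => (1:ℝ)) ⬝ᵥ x = 0 := by
    rw [dotProduct]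
    simp only [one_mul, hx]
    rw [Finset.sum_sub_distrib, hsum_u, Finset.sum_const, Finset.card_univ, Fintype.card_fin,
      nsmul_eq_mul]
    field_simp
    ring
  have hkey := key hn2 A hA ev σ hev hanti (d:ℝ) (fun _ => (1:ℝ)) x honene hone ht hvx
  rw [hxAx, hxx] at hkey
  -- arithmetic conclusion
  have hd : (d:ℝ) ≤ ε * ((n:ℝ) - 2) := by
    have h1 : ((⌈(d:ℝ)/ε⌉₊ : ℝ)) + 5 ≤ (n:ℝ) := by exact_mod_cast hN
    have h2 : (d:ℝ)/ε ≤ (n:ℝ) - 2 := le_trans (Nat.le_ceil _) (by linarith)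
    rw [div_le_iff₀ hε] at h2
    linarith [h2]
  have h2n : (0:ℝ) < 2 - 4/(n:ℝ) := by
    have h1 : 4/(n:ℝ) ≤ 1 := by
      rw [div_le_one hnpos]; linarith
    linarith
  have hstep : ((d:ℝ)/2 - ε) * (2 - 4/(n:ℝ)) ≤ (d:ℝ) - 4*(d:ℝ)/(n:ℝ) := by
    have key2 : (((d:ℝ)/2 - ε) * (2 - 4/(n:ℝ))) * (n:ℝ) ≤ ((d:ℝ) - 4*(d:ℝ)/(n:ℝ)) * (n:ℝ) := by
      have e2 : (((d:ℝ)/2 - ε) * (2 - 4/(n:ℝ))) * (n:ℝ)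
          = (d:ℝ)*(n:ℝ) - 2*(d:ℝ) - 2*ε*(n:ℝ) + 4*ε := by field_simp; try ring
      have e3 : ((d:ℝ) - 4*(d:ℝ)/(n:ℝ)) * (n:ℝ) = (d:ℝ)*(n:ℝ) - 4*(d:ℝ) := by field_simp; try ring
      rw [e2, e3]
      nlinarith [hd]
    exact le_of_mul_le_mul_right key2 hnpos
  exact (mul_le_mul_iff_left₀ h2n).mp (le_trans hstep hkey)
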